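/- Trahan's theorem: If f : ℝ → ℝ is differentiable at every point of the closed interval [a,b] (with a < b) and (f'(b) - (f(b)-f(a))/(b-a)) · (f'(a) - (f(b)-f(a))/(b-a)) ≥ 0, then there exists a point η ∈ (a,b] such that f'(η) = (f(η) - f(a))/(η - a). -/

import Mathlib

open Set Filter Topology

private lemma trahan_aux_pos (φ φ' : ℝ → ℝ) (a b : ℝ) (hab : a < b)
    (hc : ContinuousOn φ (Set.Icc a b))
    (hd : ∀ x ∈ Set.Ioc a b, HasDerivWithinAt φ (φ' x) (Set.Icc a b) x)
    (hb : 0 < φ' b) (hba : φ b ≤ φ a) : ∃ η ∈ Set.Ioo a b, φ' η = 0 := by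
  -- find x < b with φ x < φ b
  have hdb := hd b ⟨hab, le_refl b⟩
  rw [hasDerivWithinAt_iff_tendsto_slope, Icc_sdiff_right] at hdb
  have hne : (𝓝[Ico a b] b).NeBot := by
    rw [← mem_closure_iff_nhdsWithin_neBot, closure_Ico hab.ne]
    exact ⟨le_of_lt hab, le_refl b⟩
  have hev : ∀ᶠ x in 𝓝[Ico a b] b, 0 < slope φ b x := hdb (Ioi_mem_nhds hb)
  obtain ⟨x, hxs, hxmem⟩ := (hev.and eventually_mem_nhdsWithin).exists
  rw [slope_def_field] at hxs
  have hxb : x - b < 0 := sub_neg.mpr hxmem.2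
  have hφx : φ x < φ b := by
    rcases div_pos_iff.mp hxs with ⟨h1, h2⟩ | ⟨h1, h2⟩
    · linarith
    · linarith
  -- min of φ on [a,b]
  obtain ⟨c, hcmem, hcmin⟩ := isCompact_Icc.exists_isMinOn (nonempty_Icc.mpr hab.le) hc
  have hcx : φ c ≤ φ x := hcmin ⟨hxmem.1, hxmem.2.le⟩
  have hcb : φ c < φ b := lt_of_le_of_lt hcx hφx
  have hca : φ c < φ a := lt_of_lt_of_le hcb hba
  have hcI : c ∈ Ioo a b := by
    refine ⟨lt_of_le_of_ne hcmem.1 ?_, lt_of_le_of_ne hcmem.2 ?_⟩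
    · rintro rfl; exact absurd rfl hca.ne
    · rintro rfl; exact absurd rfl hcb.ne
  have hnhds : Icc a b ∈ 𝓝 c := Icc_mem_nhds hcI.1 hcI.2
  have hda : HasDerivAt φ (φ' c) c := (hd c ⟨hcI.1, hcI.2.le⟩).hasDerivAt hnhds
  exact ⟨c, hcI, (hcmin.isLocalMin hnhds).hasDerivAt_eq_zero hda⟩

private lemma trahan_aux (φ φ' : ℝ → ℝ) (a b : ℝ) (hab : a < b)
    (hc : ContinuousOn φ (Set.Icc a b))
    (hd : ∀ x ∈ Set.Ioc a b, HasDerivWithinAt φ (φ' x) (Set.Icc a b) x)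
    (h : (φ b - φ a) * φ' b ≤ 0) : ∃ η ∈ Set.Ioc a b, φ' η = 0 := by
  rcases lt_trichotomy (φ' b) 0 with hb | hb | hb
  · have hba : φ a ≤ φ b := by nlinarith
    obtain ⟨η, hη, h0⟩ := trahan_aux_pos (fun x => -φ x) (fun x => -φ' x) a b hab
      hc.neg (fun x hx => (hd x hx).neg) (by simpa using hb) (by simpa using hba)
    exact ⟨η, ⟨hη.1, hη.2.le⟩, by linarith [neg_eq_zero.mp h0]⟩
  · exact ⟨b, ⟨hab, le_refl b⟩, hb⟩
  · have hba : φ b ≤ φ a := by nlinarith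
    obtain ⟨η, hη, h0⟩ := trahan_aux_pos φ φ' a b hab hc hd hb hba
    exact ⟨η, ⟨hη.1, hη.2.le⟩, h0⟩

/-- **Trahan's theorem.** If `f` is differentiable at every point of `[a,b]`
(one-sidedly at the endpoints), with derivative `f'`, and
`(f'(b) - (f(b)-f(a))/(b-a)) · (f'(a) - (f(b)-f(a))/(b-a)) ≥ 0`, then there exists
`η ∈ (a,b]` with `f'(η) = (f(η) - f(a))/(η - a)`. -/
theorem trahan_theorem (f f' : ℝ → ℝ) (a b : ℝ) (hab : a < b)
    (hf : ∀ x ∈ Set.Icc a b, HasDerivWithinAt f (f' x) (Set.Icc a b) x)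
    (hcond : (f' b - (f b - f a) / (b - a)) * (f' a - (f b - f a) / (b - a)) ≥ 0) :
    ∃ η ∈ Set.Ioc a b, f' η = (f η - f a) / (η - a) := by
  set φ : ℝ → ℝ := fun x => if x = a then f' a else (f x - f a) / (x - a) with hφdef
  set φ' : ℝ → ℝ := fun x => (f' x * (x - a) - (f x - f a)) / (x - a) ^ 2 with hφ'def
  have hφa : φ a = f' a := if_pos rfl
  have hφne : ∀ x, x ≠ a → φ x = (f x - f a) / (x - a) := fun x hx => if_neg hx
  have hfc : ContinuousOn f (Icc a b) := fun x hx => (hf x hx).continuousWithinAt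
  -- continuity of φ
  have hφc : ContinuousOn φ (Icc a b) := by
    intro x hx
    rcases eq_or_ne x a with rfl | hxa
    · rw [← continuousWithinAt_diff_self]
      have := (hasDerivWithinAt_iff_tendsto_slope.mp (hf x hx))
      unfold ContinuousWithinAt
      rw [hφa]
      refine this.congr' ?_
      filter_upwards [eventually_mem_nhdsWithin] with y hy
      rw [slope_def_field, hφne y hy.2]
    · have hψ : ContinuousWithinAt (fun y => (f y - f a) / (y - a)) (Icc a b) x := by
        exact ((hfc x hx).sub continuousWithinAt_const).div
          ((continuousWithinAt_id.sub continuousWithinAt_const)) (sub_ne_zero.mpr hxa)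
      refine hψ.congr_of_eventuallyEq ?_ (hφne x hxa)
      filter_upwards [mem_nhdsWithin_of_mem_nhds (isOpen_compl_singleton.mem_nhds hxa)]
        with y hy
      exact hφne y hy
  -- derivative of φ on (a,b]
  have hφd : ∀ x ∈ Ioc a b, HasDerivWithinAt φ (φ' x) (Icc a b) x := by
    intro x hx
    have hxa : x ≠ a := ne_of_gt hx.1
    have hxmem : x ∈ Icc a b := ⟨hx.1.le, hx.2⟩
    have hnum : HasDerivWithinAt (fun y => f y - f a) (f' x) (Icc a b) x :=
      (hf x hxmem).sub_const (f a)
    have hden : HasDerivWithinAt (fun y => y - a) 1 (Icc a b) x :=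
      (hasDerivWithinAt_id x _).sub_const a
    have hψ := hnum.div hden (sub_ne_zero.mpr hxa)
    have heq : (f' x * (x - a) - (f x - f a) * 1) / (x - a) ^ 2 = φ' x := by
      rw [hφ'def]; ring_nf
    rw [heq] at hψ
    refine hψ.congr_of_eventuallyEq ?_ (hφne x hxa)
    filter_upwards [mem_nhdsWithin_of_mem_nhds (isOpen_compl_singleton.mem_nhds hxa)]
      with y hy
    exact hφne y hy
  -- the sign condition
  have hba : b - a > 0 := sub_pos.mpr hab
  have hcond' : (φ b - φ a) * φ' b ≤ 0 := by
    rw [hφa, hφne b hab.ne', hφ'def]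
    have key : ((f b - f a) / (b - a) - f' a) * ((f' b * (b - a) - (f b - f a)) / (b - a) ^ 2)
        = -(((f' b - (f b - f a) / (b - a)) * (f' a - (f b - f a) / (b - a))) / (b - a)) := by
      field_simp
      ring
    rw [key]
    exact neg_nonpos.mpr (div_nonneg hcond hba.le)
  obtain ⟨η, hη, h0⟩ := trahan_aux φ φ' a b hab hφc hφd hcond'
  have hηa : η - a > 0 := sub_pos.mpr hη.1
  refine ⟨η, hη, ?_⟩
  rw [hφ'def] at h0
  have h1 : f' η * (η - a) - (f η - f a) = 0 := by
    have := (div_eq_zero_iff.mp h0).resolve_right (pow_ne_zero 2 hηa.ne')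
    exact this
  rw [eq_div_iff hηa.ne']
  linarith
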